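/- Let T be the tensor of order 4 and dimension 2 with entries T_{1122} = T_{2211} = 1 and all other entries zero. Then T is conjugate partial-symmetric, rank(T) = 2, and rank_cps(T) ≥ 3. In particular, rank(T) < rank_ps(T), so there exists a CPS tensor whose rank is strictly smaller than its PS rank. -/
import Mathlib


open scoped BigOperators
open ComplexConjugate

/-- Partial-symmetric tensor of order `2d`, dimension `n` (two-block index form). -/
def IsPS {n d : ℕ} (T : (Fin d → Fin n) → (Fin d → Fin n) → ℂ) : Prop :=
  ∀ (σ τ : Equiv.Perm (Fin d)) (i j : Fin d → Fin n), T (i ∘ σ) (j ∘ τ) = T i j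

/-- Conjugate partial-symmetric tensor. -/
def IsCPS {n d : ℕ} (T : (Fin d → Fin n) → (Fin d → Fin n) → ℂ) : Prop :=
  IsPS T ∧ ∀ i j, T i j = conj (T j i)

/-- The rank of `T`. -/
noncomputable def tRank {n d : ℕ} (T : (Fin d → Fin n) → (Fin d → Fin n) → ℂ) : ℕ :=
  sInf {r : ℕ | ∃ a b : Fin r → Fin d → Fin n → ℂ,
    ∀ i j, T i j = ∑ s, (∏ k, a s k (i k)) * ∏ k, b s k (j k)}

/-- The PS rank of `T`. -/
noncomputable def psRank {n d : ℕ} (T : (Fin d → Fin n) → (Fin d → Fin n) → ℂ) : ℕ :=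
  sInf {r : ℕ | ∃ (lam : Fin r → ℂ) (a : Fin r → Fin n → ℂ),
    ∀ i j, T i j = ∑ s, lam s * ((∏ k, conj (a s (i k))) * ∏ k, a s (j k))}

/-- The CPS rank of `T`. -/
noncomputable def cpsRank {n d : ℕ} (T : (Fin d → Fin n) → (Fin d → Fin n) → ℂ) : ℕ :=
  sInf {r : ℕ | ∃ (lam : Fin r → ℝ) (a : Fin r → Fin n → ℂ),
    ∀ i j, T i j = ∑ s, (lam s : ℂ) * ((∏ k, conj (a s (i k))) * ∏ k, a s (j k))}

/-- The order-4, dimension-2 tensor with `T_{1122} = T_{2211} = 1` and all other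
entries zero. -/
def T7 : (Fin 2 → Fin 2) → (Fin 2 → Fin 2) → ℂ := fun p q =>
  if (p 0 = 0 ∧ p 1 = 0 ∧ q 0 = 1 ∧ q 1 = 1) ∨
     (p 0 = 1 ∧ p 1 = 1 ∧ q 0 = 0 ∧ q 1 = 0) then 1 else 0

lemma fin2cases : ∀ v : Fin 2, v = 0 ∨ v = 1 := by decide

lemma T7v1 : T7 (fun _ => 0) (fun _ => 0) = 0 := by
  norm_num [T7, show (0:Fin 2) ≠ 1 by decide]
lemma T7v2 : T7 (fun _ => 0) (id : Fin 2 → Fin 2) = 0 := by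
  norm_num [T7, show (0:Fin 2) ≠ 1 by decide, show (1:Fin 2) ≠ 0 by decide]
lemma T7v3 : T7 (fun _ => 0) (fun _ => 1) = 1 := by
  norm_num [T7]
lemma T7v4 : T7 (fun _ => 1) (fun _ => 0) = 1 := by
  norm_num [T7, show (1:Fin 2) ≠ 0 by decide]

lemma T7_isCPS : IsCPS T7 := by
  constructor
  · have key : ∀ (σ : Equiv.Perm (Fin 2)) (p : Fin 2 → Fin 2) (v : Fin 2),
        (p (σ 0) = v ∧ p (σ 1) = v) ↔ (p 0 = v ∧ p 1 = v) := by
      intro σ p v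
      rcases fin2cases (σ 0) with h0 | h0
      · have h1 : σ 1 = 1 := by
          rcases fin2cases (σ 1) with h1 | h1
          · exact absurd (σ.injective (h0.trans h1.symm)) (by decide)
          · exact h1
        rw [h0, h1]
      · have h1 : σ 1 = 0 := by
          rcases fin2cases (σ 1) with h1 | h1
          · exact h1
          · exact absurd (σ.injective (h0.trans h1.symm)) (by decide)
        rw [h0, h1]; exact and_comm
    intro σ τ i j
    have h1 := key σ i 0
    have h2 := key σ i 1
    have h3 := key τ j 0
    have h4 := key τ j 1
    simp only [T7, Function.comp_apply]
    refine if_congr ?_ rfl rfl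
    constructor
    · rintro (⟨a1,a2,a3,a4⟩|⟨a1,a2,a3,a4⟩)
      · obtain ⟨b1,b2⟩ := h1.mp ⟨a1,a2⟩
        obtain ⟨b3,b4⟩ := h4.mp ⟨a3,a4⟩
        exact Or.inl ⟨b1,b2,b3,b4⟩
      · obtain ⟨b1,b2⟩ := h2.mp ⟨a1,a2⟩
        obtain ⟨b3,b4⟩ := h3.mp ⟨a3,a4⟩
        exact Or.inr ⟨b1,b2,b3,b4⟩
    · rintro (⟨a1,a2,a3,a4⟩|⟨a1,a2,a3,a4⟩)
      · obtain ⟨b1,b2⟩ := h1.mpr ⟨a1,a2⟩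
        obtain ⟨b3,b4⟩ := h4.mpr ⟨a3,a4⟩
        exact Or.inl ⟨b1,b2,b3,b4⟩
      · obtain ⟨b1,b2⟩ := h2.mpr ⟨a1,a2⟩
        obtain ⟨b3,b4⟩ := h3.mpr ⟨a3,a4⟩
        exact Or.inr ⟨b1,b2,b3,b4⟩
  · intro i j
    have hiff : ((i 0 = 0 ∧ i 1 = 0 ∧ j 0 = 1 ∧ j 1 = 1) ∨
        (i 0 = 1 ∧ i 1 = 1 ∧ j 0 = 0 ∧ j 1 = 0)) ↔
        ((j 0 = 0 ∧ j 1 = 0 ∧ i 0 = 1 ∧ i 1 = 1) ∨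
        (j 0 = 1 ∧ j 1 = 1 ∧ i 0 = 0 ∧ i 1 = 0)) := by
      tauto
    rw [T7, T7, if_congr hiff rfl rfl]
    split_ifs <;> simp

lemma T7_rank2_mem : 2 ∈ {r : ℕ | ∃ a b : Fin r → Fin 2 → Fin 2 → ℂ,
    ∀ i j, T7 i j = ∑ s, (∏ k, a s k (i k)) * ∏ k, b s k (j k)} := by
  refine ⟨fun s k v => if v = s then 1 else 0, fun s k v => if v = s then 0 else 1, ?_⟩
  intro i j
  rcases fin2cases (i 0) with hi0 | hi0 <;> rcases fin2cases (i 1) with hi1 | hi1 <;>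
    rcases fin2cases (j 0) with hj0 | hj0 <;> rcases fin2cases (j 1) with hj1 | hj1 <;>
    simp [T7, hi0, hi1, hj0, hj1, Fin.sum_univ_two, Fin.prod_univ_two]

lemma T7_cps4_mem : 4 ∈ {r : ℕ | ∃ (lam : Fin r → ℝ) (a : Fin r → Fin 2 → ℂ),
    ∀ i j, T7 i j = ∑ s, (lam s : ℂ) * ((∏ k, conj (a s (i k))) * ∏ k, a s (j k))} := by
  refine ⟨![1/4, 1/4, -1/4, -1/4], ![![1,1], ![1,-1], ![1,Complex.I], ![1,-Complex.I]], ?_⟩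
  intro i j
  rcases fin2cases (i 0) with hi0 | hi0 <;> rcases fin2cases (i 1) with hi1 | hi1 <;>
    rcases fin2cases (j 0) with hj0 | hj0 <;> rcases fin2cases (j 1) with hj1 | hj1 <;>
    simp only [T7, hi0, hi1, hj0, hj1, Fin.sum_univ_four, Fin.prod_univ_two,
      Matrix.cons_val_zero, Matrix.cons_val_one, Matrix.head_cons, Matrix.cons_val_two,
      Matrix.cons_val_three, Matrix.tail_cons, map_one, map_neg, Complex.conj_I] <;>
    norm_num

lemma cps_mem_ps {r : ℕ} (h : r ∈ {r : ℕ | ∃ (lam : Fin r → ℝ) (a : Fin r → Fin 2 → ℂ),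
    ∀ i j, T7 i j = ∑ s, (lam s : ℂ) * ((∏ k, conj (a s (i k))) * ∏ k, a s (j k))}) :
    r ∈ {r : ℕ | ∃ (lam : Fin r → ℂ) (a : Fin r → Fin 2 → ℂ),
    ∀ i j, T7 i j = ∑ s, lam s * ((∏ k, conj (a s (i k))) * ∏ k, a s (j k))} := by
  obtain ⟨lam, a, hh⟩ := h
  exact ⟨fun s => (lam s : ℂ), a, hh⟩

lemma aux1 (l x y : ℂ) (h1 : l * ((conj x * conj x) * (x * x)) = 0)
    (h5 : l * ((conj x * conj x) * (y * y)) = 1) : False := by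
  have hx : x ≠ 0 := by rintro rfl; simp at h5
  have hl : l ≠ 0 := by rintro rfl; simp at h5
  rcases mul_eq_zero.mp h1 with h | h
  · exact hl h
  · simp [mul_eq_zero, map_eq_zero, hx] at h

lemma ps_low : ∀ r : ℕ, (∃ (lam : Fin r → ℂ) (a : Fin r → Fin 2 → ℂ),
    ∀ i j, T7 i j = ∑ s, lam s * ((∏ k, conj (a s (i k))) * ∏ k, a s (j k))) → 3 ≤ r := by
  intro r hr
  by_contra hlt
  push_neg at hlt
  obtain ⟨lam, a, h⟩ := hr
  interval_cases r
  · have E5 := h (fun _ => 0) (fun _ => 1)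
    rw [T7v3] at E5
    simp at E5
  · have E1 := h (fun _ => 0) (fun _ => 0)
    have E5 := h (fun _ => 0) (fun _ => 1)
    rw [T7v1] at E1; rw [T7v3] at E5
    simp only [Fin.sum_univ_one, Fin.prod_univ_two] at E1 E5
    exact aux1 (lam 0) (a 0 0) (a 0 1)
      (by linear_combination -E1) (by linear_combination -E5)
  · have E1 := h (fun _ => 0) (fun _ => 0)
    have E3 := h (fun _ => 0) (id : Fin 2 → Fin 2)
    have E5 := h (fun _ => 0) (fun _ => 1)
    rw [T7v1] at E1; rw [T7v2] at E3; rw [T7v3] at E5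
    simp only [Fin.sum_univ_two, Fin.prod_univ_two, id_eq] at E1 E3 E5
    set l0 := lam 0; set l1 := lam 1
    set x0 := a 0 0; set y0 := a 0 1; set x1 := a 1 0; set y1 := a 1 1
    have hl0 : l0 ≠ 0 := by
      intro h0
      exact aux1 l1 x1 y1
        (by linear_combination -E1 - ((conj x0 * conj x0) * (x0 * x0)) * h0)
        (by linear_combination -E5 - ((conj x0 * conj x0) * (y0 * y0)) * h0)
    have hl1 : l1 ≠ 0 := by
      intro h0
      exact aux1 l0 x0 y0
        (by linear_combination -E1 - ((conj x1 * conj x1) * (x1 * x1)) * h0)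
        (by linear_combination -E5 - ((conj x1 * conj x1) * (y1 * y1)) * h0)
    have hD2 : l0 * l1 * ((conj x0 * x0) * (conj x1 * y1) - (conj x1 * x1) * (conj x0 * y0)) ^ 2
        = 0 := by
      linear_combination (-1 : ℂ) * E1
        + (l0 * ((conj x0 * conj x0) * (x0 * y0)) + l1 * ((conj x1 * conj x1) * (x1 * y1))) * E3
        + (-(l0 * ((conj x0 * conj x0) * (x0 * x0)) + l1 * ((conj x1 * conj x1) * (x1 * x1)))) * E5
    have hD : (conj x0 * x0) * (conj x1 * y1) - (conj x1 * x1) * (conj x0 * y0) = 0 := by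
      rcases mul_eq_zero.mp hD2 with hc | hc
      · exact absurd hc (mul_ne_zero hl0 hl1)
      · exact pow_eq_zero_iff (by norm_num) |>.mp hc
    have hP0 : conj x0 * x0 = 0 := by
      linear_combination (-(conj x0 * y0)) * E3 + (l1 * (conj x1 * y1)) * hD
        + (conj x0 * x0) * E5
    have hx0 : x0 = 0 := by
      rcases mul_eq_zero.mp hP0 with hc | hc
      · simpa [map_eq_zero] using hc
      · exact hc
    have hx1 : x1 = 0 := by
      have h1' : l1 * ((conj x1 * conj x1) * (x1 * x1)) = 0 := by
        linear_combination -E1 - (l0 * (conj x0 * conj x0 * x0)) * hx0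
      rcases mul_eq_zero.mp h1' with hc | hc
      · exact absurd hc hl1
      · rcases mul_eq_zero.mp hc with hc | hc
        · simp [mul_eq_zero, map_eq_zero] at hc; exact hc
        · exact mul_self_eq_zero.mp hc
    have hcx0 : conj x0 = 0 := by simp [hx0]
    have hcx1 : conj x1 = 0 := by simp [hx1]
    rw [hcx0, hcx1] at E5
    simp at E5

lemma t_low : ∀ r : ℕ, (∃ a b : Fin r → Fin 2 → Fin 2 → ℂ,
    ∀ i j, T7 i j = ∑ s, (∏ k, a s k (i k)) * ∏ k, b s k (j k)) → 2 ≤ r := by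
  intro r hr
  by_contra hlt
  push_neg at hlt
  obtain ⟨a, b, h⟩ := hr
  interval_cases r
  · have E5 := h (fun _ => 0) (fun _ => 1)
    rw [T7v3] at E5
    simp at E5
  · have E01 := h (fun _ => 0) (fun _ => 1)
    have E10 := h (fun _ => 1) (fun _ => 0)
    have E00 := h (fun _ => 0) (fun _ => 0)
    rw [T7v3] at E01; rw [T7v4] at E10; rw [T7v1] at E00
    simp only [Fin.sum_univ_one] at E01 E10 E00
    have hA : (∏ k, a 0 k ((fun _ => (0 : Fin 2)) k)) ≠ 0 :=
      left_ne_zero_of_mul_eq_one E01.symm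
    have hB : (∏ k, b 0 k ((fun _ => (0 : Fin 2)) k)) ≠ 0 :=
      right_ne_zero_of_mul_eq_one E10.symm
    exact mul_ne_zero hA hB E00.symm

lemma T7_tRank : tRank T7 = 2 := by
  apply le_antisymm
  · exact Nat.sInf_le T7_rank2_mem
  · exact le_csInf ⟨2, T7_rank2_mem⟩ t_low

lemma T7_psRank : 3 ≤ psRank T7 :=
  le_csInf ⟨4, cps_mem_ps T7_cps4_mem⟩ ps_low

lemma T7_cpsRank : 3 ≤ cpsRank T7 :=
  le_csInf ⟨4, T7_cps4_mem⟩ (fun r hr => ps_low r (cps_mem_ps hr))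

/-- `T7` is CPS, `rank(T7) = 2`, `rank_cps(T7) ≥ 3`, and `rank(T7) < rank_ps(T7)`. -/
theorem stmt7 :
    IsCPS T7 ∧ tRank T7 = 2 ∧ 3 ≤ cpsRank T7 ∧ tRank T7 < psRank T7 ∧
    ∃ T : (Fin 2 → Fin 2) → (Fin 2 → Fin 2) → ℂ, IsCPS T ∧ tRank T < psRank T := by
  have hlt : tRank T7 < psRank T7 := by
    rw [T7_tRank]
    exact lt_of_lt_of_le (by norm_num) T7_psRank
  exact ⟨T7_isCPS, T7_tRank, T7_cpsRank, hlt, ⟨T7, T7_isCPS, hlt⟩⟩
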